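/- Let X be a compact topological space and let 𝓜 be a collection of clopen subsets of X containing ∅ and X and closed under binary unions, binary intersections, and complementation (a Boolean subalgebra of the clopen algebra). Then there exists a symmetric set E ⊆ X × X (i.e., (u,v) ∈ E implies (v,u) ∈ E) such that a clopen set A belongs to 𝓜 if and only if for every (u,v) ∈ E, u ∈ A implies v ∈ A. -/

import Mathlib

theorem aux_inter' {X : Type*} {𝓜 : Set (Set X)} (h1 : Set.univ ∈ 𝓜)
    (hi : ∀ A ∈ 𝓜, ∀ B ∈ 𝓜, A ∩ B ∈ 𝓜) {ι : Type*} (t : Finset ι) (f : ι → Set X)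
    (hf : ∀ v ∈ t, f v ∈ 𝓜) : (⋂ v ∈ t, f v) ∈ 𝓜 := by
  classical
  revert hf
  induction t using Finset.induction_on with
  | empty => intro _; simpa using h1
  | insert _ _ ha ih =>
    intro hf
    rw [Finset.set_biInter_insert]
    exact hi _ (hf _ (Finset.mem_insert_self _ _)) _
      (ih fun v hv => hf v (Finset.mem_insert_of_mem hv))

theorem aux_union' {X : Type*} {𝓜 : Set (Set X)} (h0 : ∅ ∈ 𝓜)
    (hu : ∀ A ∈ 𝓜, ∀ B ∈ 𝓜, A ∪ B ∈ 𝓜) {ι : Type*} (t : Finset ι) (f : ι → Set X)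
    (hf : ∀ v ∈ t, f v ∈ 𝓜) : (⋃ v ∈ t, f v) ∈ 𝓜 := by
  classical
  revert hf
  induction t using Finset.induction_on with
  | empty => intro _; simpa using h0
  | insert _ _ ha ih =>
    intro hf
    rw [Finset.set_biUnion_insert]
    exact hu _ (hf _ (Finset.mem_insert_self _ _)) _
      (ih fun v hv => hf v (Finset.mem_insert_of_mem hv))

theorem stmt_2 {X : Type*} [TopologicalSpace X] [CompactSpace X]
    (𝓜 : Set (Set X)) (hcl : ∀ A ∈ 𝓜, IsClopen A)
    (h0 : ∅ ∈ 𝓜) (h1 : Set.univ ∈ 𝓜)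
    (hu : ∀ A ∈ 𝓜, ∀ B ∈ 𝓜, A ∪ B ∈ 𝓜)
    (hi : ∀ A ∈ 𝓜, ∀ B ∈ 𝓜, A ∩ B ∈ 𝓜)
    (hc : ∀ A ∈ 𝓜, Aᶜ ∈ 𝓜) :
    ∃ E : Set (X × X), (∀ p ∈ E, (p.2, p.1) ∈ E) ∧
      ∀ A : Set X, IsClopen A →
        (A ∈ 𝓜 ↔ ∀ p ∈ E, p.1 ∈ A → p.2 ∈ A) := by
  classical
  refine ⟨{p : X × X | ∀ A ∈ 𝓜, p.1 ∈ A ↔ p.2 ∈ A}, ?_, ?_⟩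
  · intro p hp A hA
    exact (hp A hA).symm
  · intro A hAcl
    constructor
    · intro hA p hp hp1
      exact (hp A hA).mp hp1
    · intro hresp
      have key : ∀ u ∈ A, ∃ C ∈ 𝓜, u ∈ C ∧ C ⊆ A := by
        intro u hu'
        have hsep : ∀ v ∈ Aᶜ, ∃ B ∈ 𝓜, u ∈ B ∧ v ∉ B := by
          intro v hv
          have hpE : ¬ (∀ S ∈ 𝓜, u ∈ S ↔ v ∈ S) := by
            intro hmem
            exact hv (hresp (u, v) hmem hu')
          push_neg at hpE
          obtain ⟨B, hB, hne⟩ := hpE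
          rcases hne with ⟨hub, hvb⟩ | ⟨hub, hvb⟩
          · exact ⟨B, hB, hub, hvb⟩
          · exact ⟨Bᶜ, hc B hB, hub, fun hvb' => hvb' hvb⟩
        set B : ↥(Aᶜ) → Set X := fun v => (hsep v v.2).choose with hBdef
        have hB : ∀ v, B v ∈ 𝓜 := fun v => (hsep v v.2).choose_spec.1
        have huB : ∀ v, u ∈ B v := fun v => (hsep v v.2).choose_spec.2.1
        have hvB : ∀ v : ↥(Aᶜ), (v : X) ∉ B v := fun v => (hsep v v.2).choose_spec.2.2
        have hcpt : IsCompact (Aᶜ : Set X) := hAcl.isOpen.isClosed_compl.isCompact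
        obtain ⟨t, ht⟩ := hcpt.elim_finite_subcover (fun v => (B v)ᶜ)
          (fun v => ((hcl _ (hB v)).compl).isOpen)
          (fun x hx => Set.mem_iUnion.mpr ⟨⟨x, hx⟩, hvB ⟨x, hx⟩⟩)
        refine ⟨⋂ v ∈ t, B v, aux_inter' h1 hi t _ (fun v _ => hB v),
          Set.mem_biInter fun v _ => huB v, ?_⟩
        intro x hx
        by_contra hxA
        obtain ⟨v, hvt, hxv⟩ := Set.mem_iUnion₂.mp (ht hxA)
        exact hxv (Set.mem_iInter₂.mp hx v hvt)
      set C : ↥A → Set X := fun u => (key u u.2).choose with hCdef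
      have hC : ∀ u, C u ∈ 𝓜 := fun u => (key u u.2).choose_spec.1
      have huC : ∀ u : ↥A, (u : X) ∈ C u := fun u => (key u u.2).choose_spec.2.1
      have hCA : ∀ u, C u ⊆ A := fun u => (key u u.2).choose_spec.2.2
      have hcpt : IsCompact A := hAcl.isClosed.isCompact
      obtain ⟨t, ht⟩ := hcpt.elim_finite_subcover C
        (fun u => (hcl _ (hC u)).isOpen)
        (fun x hx => Set.mem_iUnion.mpr ⟨⟨x, hx⟩, huC ⟨x, hx⟩⟩)
      have hEq : A = ⋃ u ∈ t, C u := by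
        apply Set.Subset.antisymm ht
        intro x hx
        obtain ⟨u, _, hxu⟩ := Set.mem_iUnion₂.mp hx
        exact hCA u hxu
      rw [hEq]
      exact aux_union' h0 hu t _ (fun u _ => hC u)
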